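/- Let f : [T₀, T₁] → ℝ be L-Lipschitz with f(t) > 0 for all t, and let P : (0,∞) → ℝ be nonnegative and monotonically decreasing. If there exists t* ∈ (T₀, T₁) and ε > 0 with [t* - ε, t* + ε] ⊆ [T₀, T₁] and f(t*) ≤ ε, then ∫_{T₀}^{T₁} P(f(t)) dt ≥ ε · P(ε + L·ε). -/

import Mathlib

/-- If the clearance `f` is `L`-Lipschitz and positive on `[T₀,T₁]`, `P` is a nonnegative
antitone barrier on `(0,∞)`, and there is `t* ∈ (T₀,T₁)` with `[t*-ε, t*+ε] ⊆ [T₀,T₁]`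
and `f(t*) ≤ ε`, then `∫_{T₀}^{T₁} P(f(t)) dt ≥ ε · P(ε + Lε)`. -/
theorem stmt_6 (T₀ T₁ L ε : ℝ) (f P : ℝ → ℝ)
    (hL : 0 ≤ L)
    (hLip : ∀ s ∈ Set.Icc T₀ T₁, ∀ t ∈ Set.Icc T₀ T₁, |f s - f t| ≤ L * |s - t|)
    (hfpos : ∀ t ∈ Set.Icc T₀ T₁, 0 < f t)
    (hPnonneg : ∀ x : ℝ, 0 < x → 0 ≤ P x)
    (hPanti : ∀ x y : ℝ, 0 < x → x ≤ y → P y ≤ P x)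
    (hε : 0 < ε) (tstar : ℝ) (htstar : tstar ∈ Set.Ioo T₀ T₁)
    (hsub : Set.Icc (tstar - ε) (tstar + ε) ⊆ Set.Icc T₀ T₁)
    (hclose : f tstar ≤ ε) :
    ε * P (ε + L * ε) ≤ ∫ t in T₀..T₁, P (f t) := by
  have hT : T₀ ≤ T₁ := le_of_lt (htstar.1.trans htstar.2)
  have htmem : tstar ∈ Set.Icc T₀ T₁ := ⟨le_of_lt htstar.1, le_of_lt htstar.2⟩
  have hcont : ContinuousOn f (Set.Icc T₀ T₁) := by
    have : LipschitzOnWith (Real.toNNReal L) f (Set.Icc T₀ T₁) := by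
      apply LipschitzOnWith.of_dist_le' (K := L)
      intro s hs t ht
      simpa [Real.dist_eq] using hLip s hs t ht
    exact this.continuousOn
  obtain ⟨t₀, ht₀, hmin⟩ := (isCompact_Icc).exists_isMinOn ⟨T₀, le_rfl, hT⟩ hcont
  set c := f t₀ with hc_def
  have hc : 0 < c := hfpos t₀ ht₀
  have hminle : ∀ t ∈ Set.Icc T₀ T₁, c ≤ f t := fun t ht => hmin ht
  set Q : ℝ → ℝ := fun x => P (max x c) with hQ_def
  have hQanti : Antitone Q := by
    intro x y hxy
    exact hPanti _ _ (lt_of_lt_of_le hc (le_max_right x c)) (max_le_max hxy le_rfl)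
  have hQeq : ∀ t ∈ Set.Icc T₀ T₁, Q (f t) = P (f t) := by
    intro t ht
    simp [hQ_def, max_eq_left (hminle t ht)]
  have hfmeas : AEMeasurable f (MeasureTheory.volume.restrict (Set.Icc T₀ T₁)) :=
    hcont.aemeasurable measurableSet_Icc
  have hQf_nonneg : ∀ t ∈ Set.Icc T₀ T₁, 0 ≤ Q (f t) := by
    intro t ht
    rw [hQeq t ht]
    exact hPnonneg _ (hfpos t ht)
  have hint : MeasureTheory.IntegrableOn (fun t => Q (f t)) (Set.Icc T₀ T₁) := by
    refine MeasureTheory.Integrable.mono' (g := fun _ => P c)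
      (MeasureTheory.integrableOn_const measure_Icc_lt_top.ne)
      (hQanti.measurable.comp_aemeasurable hfmeas).aestronglyMeasurable ?_
    · filter_upwards [MeasureTheory.ae_restrict_mem measurableSet_Icc] with t ht
      rw [Real.norm_eq_abs, abs_of_nonneg (hQf_nonneg t ht), hQeq t ht]
      exact hPanti c (f t) hc (hmin ht : c ≤ f t)
  have hkey : ∫ t in T₀..T₁, P (f t) = ∫ t in T₀..T₁, Q (f t) :=
    intervalIntegral.integral_congr (by
      intro t ht
      rw [Set.uIcc_of_le hT] at ht
      exact (hQeq t ht).symm)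
  rw [hkey]
  -- split the interval
  have hsub1 : Set.Icc tstar (tstar + ε) ⊆ Set.Icc T₀ T₁ :=
    fun x hx => hsub ⟨by linarith [hx.1], hx.2⟩
  have hle1 : T₀ ≤ tstar := htmem.1
  have hle2 : tstar ≤ tstar + ε := by linarith
  have hle3 : tstar + ε ≤ T₁ := (hsub ⟨by linarith, le_rfl⟩).2
  have hii : ∀ a b : ℝ, T₀ ≤ a → a ≤ b → b ≤ T₁ →
      IntervalIntegrable (fun t => Q (f t)) MeasureTheory.volume a b := by
    intro a b ha hab hb
    apply MeasureTheory.IntegrableOn.intervalIntegrable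
    apply hint.mono_set
    rw [Set.uIcc_of_le hab]
    exact Set.Icc_subset_Icc ha hb
  have i1 := hii T₀ tstar le_rfl hle1 (le_trans hle2 hle3)
  have i2 := hii tstar (tstar + ε) hle1 hle2 hle3
  have i3 := hii (tstar + ε) T₁ (le_trans hle1 hle2) hle3 le_rfl
  have hsplit : ∫ t in T₀..T₁, Q (f t) =
      (∫ t in T₀..tstar, Q (f t)) + (∫ t in tstar..(tstar + ε), Q (f t))
        + (∫ t in (tstar + ε)..T₁, Q (f t)) := by
    rw [intervalIntegral.integral_add_adjacent_intervals i1 i2,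
      intervalIntegral.integral_add_adjacent_intervals (i1.trans i2) i3]
  have hnn : ∀ a b : ℝ, T₀ ≤ a → a ≤ b → b ≤ T₁ →
      0 ≤ ∫ t in a..b, Q (f t) := by
    intro a b ha hab hb
    apply intervalIntegral.integral_nonneg hab
    intro t ht
    exact hQf_nonneg t ⟨le_trans ha ht.1, le_trans ht.2 hb⟩
  have hmid : ε * P (ε + L * ε) ≤ ∫ t in tstar..(tstar + ε), Q (f t) := by
    have hconst : ∫ _ in tstar..(tstar + ε), P (ε + L * ε) = ε * P (ε + L * ε) := by
      simp [intervalIntegral.integral_const]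
    rw [← hconst]
    apply intervalIntegral.integral_mono_on hle2 (intervalIntegrable_const) i2
    intro t ht
    have htI : t ∈ Set.Icc T₀ T₁ := hsub1 ht
    rw [hQeq t htI]
    apply hPanti _ _ (hfpos t htI)
    have hlip := hLip t htI tstar htmem
    have habs : |t - tstar| ≤ ε := by
      rw [abs_le]; constructor <;> [linarith [ht.1]; linarith [ht.2]]
    have : f t ≤ f tstar + L * |t - tstar| := by
      have := abs_le.mp hlip
      linarith [this.1, this.2]
    calc f t ≤ f tstar + L * |t - tstar| := this
      _ ≤ ε + L * ε := by nlinarith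
  rw [hsplit]
  linarith [hnn T₀ tstar le_rfl hle1 (le_trans hle2 hle3),
    hnn (tstar + ε) T₁ (le_trans hle1 hle2) hle3 le_rfl, hmid]
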